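/- For every positive integer n and real x, sum_{r=0}^{n} C(n+r, 2r) x^r / (n+r) = (1/n) T_n(x/2 + 1), where T_n is the n-th Chebyshev polynomial of the first kind. -/

import Mathlib

open Finset Polynomial

noncomputable def aa (n r : ℕ) : ℝ :=
  (n : ℝ) * ((n + r).choose (2 * r) : ℝ) / ((n + r : ℕ) : ℝ)

lemma key_core (s d : ℕ) :
    ((s+d+3 : ℕ) : ℝ) * ((2*s+d+4).choose (2*s+2) : ℝ) / ((2*s+d+4 : ℕ) : ℝ)
      = ((s+d+2 : ℕ) : ℝ) * ((2*s+d+2).choose (2*s) : ℝ) / ((2*s+d+2 : ℕ) : ℝ)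
        + 2 * (((s+d+2 : ℕ) : ℝ) * ((2*s+d+3).choose (2*s+2) : ℝ) / ((2*s+d+3 : ℕ) : ℝ))
        - ((s+d+1 : ℕ) : ℝ) * ((2*s+d+2).choose (2*s+2) : ℝ) / ((2*s+d+2 : ℕ) : ℝ) := by
  rw [Nat.cast_choose ℝ (by omega : 2*s+2 ≤ 2*s+d+4),
      Nat.cast_choose ℝ (by omega : 2*s ≤ 2*s+d+2),
      Nat.cast_choose ℝ (by omega : 2*s+2 ≤ 2*s+d+3),
      Nat.cast_choose ℝ (by omega : 2*s+2 ≤ 2*s+d+2),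
      show 2*s+d+4 - (2*s+2) = d+2 from by omega,
      show 2*s+d+2 - 2*s = d+2 from by omega,
      show 2*s+d+3 - (2*s+2) = d+1 from by omega,
      show 2*s+d+2 - (2*s+2) = d from by omega,
      show 2*s+d+4 = (2*s+d+3)+1 from by omega,
      show (2*s+d+3 : ℕ) = (2*s+d+2)+1 from by omega,
      show 2*s+2 = (2*s+1)+1 from by omega,
      show (2*s+1 : ℕ) = (2*s)+1 from by omega,
      show d+2 = (d+1)+1 from by omega]
  simp only [Nat.factorial_succ]
  push_cast
  have h1 : ((2*s+d+2).factorial : ℝ) ≠ 0 := by positivity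
  have h2 : ((2*s).factorial : ℝ) ≠ 0 := by positivity
  have h3 : (d.factorial : ℝ) ≠ 0 := by positivity
  field_simp
  ring

lemma keyfull (n r : ℕ) (hn : 1 ≤ n) (hr : 1 ≤ r) (hr2 : r ≤ n + 2) :
    aa (n+2) r = aa (n+1) (r-1) + 2 * aa (n+1) r - aa n r := by
  obtain ⟨s, rfl⟩ : ∃ s, r = s + 1 := ⟨r - 1, by omega⟩
  simp only [Nat.add_sub_cancel, aa]
  rcases le_or_gt (s+1) n with h | h
  · obtain ⟨d, rfl⟩ : ∃ d, n = s + 1 + d := ⟨n - (s+1), by omega⟩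
    rw [show s+1+d+2+(s+1) = 2*s+d+4 from by omega,
        show s+1+d+1+s = 2*s+d+2 from by omega,
        show s+1+d+1+(s+1) = 2*s+d+3 from by omega,
        show s+1+d+(s+1) = 2*s+d+2 from by omega,
        show 2*(s+1) = 2*s+2 from by omega,
        show s+1+d+2 = s+d+3 from by omega,
        show s+1+d+1 = s+d+2 from by omega,
        show s+1+d = s+d+1 from by omega]
    exact key_core s d
  · rcases (by omega : s + 1 = n + 1 ∨ s + 1 = n + 2) with h' | h'
    · obtain rfl : s = n := by omega
      rw [show s+2+(s+1) = 2*s+3 from by omega,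
          show s+1+s = 2*s+1 from by omega,
          show s+1+(s+1) = 2*s+2 from by omega,
          show s+(s+1) = 2*s+1 from by omega,
          show 2*(s+1) = 2*s+2 from by omega,
          show (2*s+3).choose (2*s+2) = 2*s+3 from by
            rw [show 2*s+3 = (2*s+2)+1 from rfl, Nat.choose_succ_self_right],
          show (2*s+1).choose (2*s) = 2*s+1 from by
            rw [show 2*s+1 = (2*s)+1 from rfl, Nat.choose_succ_self_right],
          Nat.choose_self,
          Nat.choose_eq_zero_of_lt (by omega : 2*s+1 < 2*s+2)]
      push_cast
      have h1 : (2*(s:ℝ)+3) ≠ 0 := by positivity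
      have h2 : (2*(s:ℝ)+1) ≠ 0 := by positivity
      have h3 : (2*(s:ℝ)+2) ≠ 0 := by positivity
      field_simp
      ring
    · obtain rfl : s = n + 1 := by omega
      rw [show n+2+(n+1+1) = 2*n+4 from by omega,
          show n+1+(n+1) = 2*n+2 from by omega,
          show n+1+(n+1+1) = 2*n+3 from by omega,
          show n+(n+1+1) = 2*n+2 from by omega,
          show 2*(n+1+1) = 2*n+4 from by omega,
          show 2*(n+1) = 2*n+2 from by omega,
          Nat.choose_self, Nat.choose_self,
          Nat.choose_eq_zero_of_lt (by omega : 2*n+3 < 2*n+4),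
          Nat.choose_eq_zero_of_lt (by omega : 2*n+2 < 2*n+4)]
      push_cast
      have h1 : (2*(n:ℝ)+4) ≠ 0 := by positivity
      have h3 : (2*(n:ℝ)+2) ≠ 0 := by positivity
      field_simp
      ring

lemma aa_zero (n r : ℕ) (h : n < r) : aa n r = 0 := by
  simp [aa, Nat.choose_eq_zero_of_lt (by omega : n + r < 2 * r)]

lemma aa_zero' (n : ℕ) (hn : 1 ≤ n) : aa n 0 = 1 := by
  simp [aa]
  omega

noncomputable def S (n : ℕ) (x : ℝ) : ℝ := ∑ r ∈ Finset.range (n+1), aa n r * x ^ r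

lemma S_ext (m n : ℕ) (h : n + 1 ≤ m) (x : ℝ) :
    ∑ r ∈ Finset.range m, aa n r * x ^ r = S n x := by
  rw [S, ← Finset.sum_subset (Finset.range_subset_range.mpr h)]
  intro i hi hi2
  rw [aa_zero n i (by simp at hi2; omega), zero_mul]

lemma Srec (n : ℕ) (hn : 1 ≤ n) (x : ℝ) :
    S (n+2) x = (x + 2) * S (n+1) x - S n x := by
  have e1 : S (n+2) x = ∑ r ∈ Finset.range (n+2), aa (n+2) (r+1) * x ^ (r+1) + aa (n+2) 0 * x ^ 0 := by
    rw [S, show n+2+1 = (n+2)+1 from rfl, Finset.sum_range_succ']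
  rw [e1]
  have e2 : ∀ r ∈ Finset.range (n+2), aa (n+2) (r+1) * x ^ (r+1)
      = aa (n+1) r * x ^ (r+1) + 2 * (aa (n+1) (r+1) * x ^ (r+1)) - aa n (r+1) * x ^ (r+1) := by
    intro r hr
    rw [keyfull n (r+1) hn (by omega) (by simp at hr; omega)]
    simp only [Nat.add_sub_cancel]
    ring
  rw [Finset.sum_congr rfl e2, Finset.sum_sub_distrib, Finset.sum_add_distrib, ← Finset.mul_sum]
  have e3 : ∑ r ∈ Finset.range (n+2), aa (n+1) r * x ^ (r+1)
      = x * S (n+1) x := by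
    rw [← S_ext (n+2) (n+1) (by omega), Finset.mul_sum]
    apply Finset.sum_congr rfl
    intro r hr; ring
  have e4 : ∑ r ∈ Finset.range (n+2), aa (n+1) (r+1) * x ^ (r+1)
      = S (n+1) x - 1 := by
    have := Finset.sum_range_succ' (fun r => aa (n+1) r * x ^ r) (n+2)
    rw [S_ext (n+3) (n+1) (by omega)] at this
    simp only [pow_zero, mul_one, aa_zero' (n+1) (by omega)] at this
    linarith
  have e5 : ∑ r ∈ Finset.range (n+2), aa n (r+1) * x ^ (r+1)
      = S n x - 1 := by
    have := Finset.sum_range_succ' (fun r => aa n r * x ^ r) (n+2)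
    rw [S_ext (n+3) n (by omega)] at this
    simp only [pow_zero, mul_one, aa_zero' n hn] at this
    linarith
  rw [e3, e4, e5, aa_zero' (n+2) (by omega)]
  ring

lemma S_one (x : ℝ) : S 1 x = x / 2 + 1 := by
  simp [S, Finset.sum_range_succ, aa, Nat.choose]
  ring

lemma S_two (x : ℝ) : S 2 x = (x + 2) * (x / 2 + 1) - 1 := by
  simp [S, Finset.sum_range_succ, aa, Nat.choose]
  norm_num
  ring

lemma main (x : ℝ) : ∀ m : ℕ, S (m+1) x = (Polynomial.Chebyshev.T ℝ (m+1)).eval (x/2+1)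
    ∧ S (m+2) x = (Polynomial.Chebyshev.T ℝ (m+2)).eval (x/2+1) := by
  intro m
  induction m with
  | zero =>
    constructor
    · rw [S_one]
      norm_num [Polynomial.Chebyshev.T_one]
    · rw [S_two]
      norm_num [Polynomial.Chebyshev.T_two]
      ring
  | succ m ih =>
    refine ⟨ih.2, ?_⟩
    have hrec := Srec (m+1) (by omega) x
    rw [show m+1+2 = m+3 from rfl, show m+1+1 = m+2 from rfl] at hrec
    rw [show m+1+2 = m+3 from rfl, hrec, ih.1, ih.2]
    push_cast
    conv_rhs => rw [Polynomial.Chebyshev.T_add_two]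
    rw [show ((m:ℤ)+1+1) = (m:ℤ)+2 from by ring]
    simp only [Polynomial.eval_sub, Polynomial.eval_mul, Polynomial.eval_X,
      Polynomial.eval_ofNat]
    ring

theorem chebyshev_T_sum (n : ℕ) (hn : 0 < n) (x : ℝ) :
    ∑ r ∈ Finset.range (n + 1), ((n + r).choose (2 * r) : ℝ) * x ^ r / (n + r)
      = (1 / n) * (Polynomial.Chebyshev.T ℝ n).eval (x / 2 + 1) := by
  obtain ⟨m, rfl⟩ : ∃ m, n = m + 1 := ⟨n - 1, by omega⟩
  have h := (main x m).1
  rw [show ((m+1:ℕ):ℤ) = (m:ℤ)+1 from by push_cast; ring, ← h, S, Finset.mul_sum]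
  apply Finset.sum_congr rfl
  intro r hr
  rw [aa]
  have h1 : ((m:ℝ)+1) ≠ 0 := by positivity
  have h2 : ((m+1+r:ℕ):ℝ) ≠ 0 := by positivity
  push_cast at h2 ⊢
  field_simp
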